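/- Let B be a unital complex C*-algebra containing a dimension-drop system (s, f_{j,k}) of size n, set b = s*s + ∑_{j=1}^n f_{j,1} s s* f_{1,j}, and assume b = t·1 for some real t with 0 < t < 1. With c_{j,k} = (t − t²)^{-1} s f_{1,j} s* f_{1,k} and d_l = (√t (1−t))^{-1} s f_{1,l}, the following hold: (i) √t · ∑_{j=1}^n c_{j,1}* d_j = s; and (ii) f_{1,j} = ∑_{k=1}^n c_{k,1}* c_{k,j} + (1−t) d_1* d_j for every 1 ≤ j ≤ n. -/

import Mathlib

/-- A *dimension-drop system* of size `n` in a unital C*-algebra `B`: elements `s` and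
`f j k` (for `j k : Fin n`, where the index `0` plays the role of `1` in the paper) of norm
at most one satisfying the relations (R1)–(R4). -/
def IsDimDropSystem {B : Type*} [CStarAlgebra B] {n : ℕ} [NeZero n]
    (s : B) (f : Fin n → Fin n → B) : Prop :=
  ‖s‖ ≤ 1 ∧ (∀ j k, ‖f j k‖ ≤ 1) ∧
    (∀ j k, star (f j k) = f k j) ∧
    (∀ j k l m, f j k * f l m = if k = l then f j j * f j m else 0) ∧
    f 0 0 * s = s ∧
    (∑ j, f j j) + star s * s = 1

/-- if `b = s*s + ∑ j, f j 0 * s * s* * f 0 j` equals `t • 1` for some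
`0 < t < 1`, then with `c j k = (t - t²)⁻¹ • s * f 0 j * s* * f 0 k` and
`d l = (√t (1 - t))⁻¹ • s * f 0 l` one has
`√t • ∑ j, (c j 0)* * d j = s` and `f 0 j = ∑ k, (c k 0)* * c k j + (1 - t) • (d 0)* * d j`. -/
theorem dimDropSystem_fiber_generation {B : Type*} [CStarAlgebra B] {n : ℕ} [NeZero n]
    (s : B) (f : Fin n → Fin n → B) (hsys : IsDimDropSystem s f)
    (t : ℝ) (ht0 : 0 < t) (ht1 : t < 1)
    (hb : star s * s + ∑ j, f j 0 * (s * star s) * f 0 j = (t : ℂ) • (1 : B))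
    (c : Fin n → Fin n → B) (d : Fin n → B)
    (hc : ∀ j k, c j k = (((t - t ^ 2 : ℝ) : ℂ))⁻¹ • (s * f 0 j * star s * f 0 k))
    (hd : ∀ l, d l = (((Real.sqrt t * (1 - t) : ℝ) : ℂ))⁻¹ • (s * f 0 l)) :
    (((Real.sqrt t : ℝ) : ℂ) • ∑ j, star (c j 0) * d j = s) ∧
      (∀ j, f 0 j = (∑ k, star (c k 0) * c k j) + ((1 - t : ℝ) : ℂ) • (star (d 0) * d j)) := by
  obtain ⟨-, -, hstar, hmul, hfs, hsum⟩ := hsys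
  set T : ℂ := (t : ℂ) with hT
  set F : B := ∑ j, f j j with hF
  have hss : star s * s = 1 - F := eq_sub_of_add_eq' hsum
  have hf00ss : f 0 0 * (s * star s) = s * star s := by rw [← mul_assoc, hfs]
  have hP : ∀ x : B, f 0 0 * (s * star s * x) = s * star s * x := fun x => by
    rw [← mul_assoc, hf00ss]
  -- sum collapses
  have L1 : ∀ j : Fin n, F * f 0 j = f 0 0 * f 0 j := by
    intro j
    rw [hF, Finset.sum_mul, Finset.sum_eq_single 0]
    · intro b _ hb0; rw [hmul]; simp [hb0]
    · simp
  have L3 : ∀ j : Fin n, f 0 j * F = f 0 0 * f 0 j := by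
    intro j
    rw [hF, Finset.mul_sum, Finset.sum_eq_single j]
    · rw [hmul]; simp
    · intro b _ hb0; rw [hmul]; simp [Ne.symm hb0]
    · simp
  -- (★★)
  have hstst : ∀ j : Fin n, s * star s * f 0 j = T • f 0 j - f 0 j + f 0 0 * f 0 j := by
    intro j
    have h := congrArg (f 0 j * ·) hb
    simp only [mul_add, Finset.mul_sum] at h
    have e1 : f 0 j * (star s * s) = f 0 j - f 0 0 * f 0 j := by
      rw [hss, mul_sub, mul_one, L3 j]
    have e2 : ∀ b : Fin n, f 0 j * (f b 0 * (s * star s) * f 0 b)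
        = if j = b then s * star s * f 0 j else 0 := by
      intro b
      rw [show f 0 j * (f b 0 * (s * star s) * f 0 b)
            = (f 0 j * f b 0) * (s * star s * f 0 b) by simp only [mul_assoc],
          hmul 0 j b 0]
      split_ifs with h'
      · subst h'; rw [mul_assoc, hP, hP]
      · simp
    rw [e1, Finset.sum_congr rfl (fun b _ => e2 b), Finset.sum_ite_eq] at h
    simp only [Finset.mem_univ, if_true, mul_smul_comm, mul_one] at h
    have h2 := eq_sub_of_add_eq' h
    rw [h2]; abel
  -- s (s* s) = T s
  have hsss : s * (star s * s) = T • s := by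
    have h := congrArg (· * s) (hstst 0)
    simp only [add_mul, sub_mul, smul_mul_assoc, mul_assoc, hfs] at h
    rw [show T • s - s + s = T • s by abel] at h
    exact h
  have hsF : s * F = (1 - T) • s := by
    have h1 : s * F = s - s * (star s * s) := by rw [hss, mul_sub, mul_one]; abel
    rw [h1, hsss, sub_smul, one_smul]
  have hquadj : ∀ j : Fin n, f 0 0 * (f 0 0 * f 0 j)
      = T • f 0 j - T • (f 0 0 * f 0 j) - f 0 j + f 0 0 * f 0 j + f 0 0 * f 0 j := by
    intro j
    have heq : (1 - F) * (1 - F) = T • (1 - F) := by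
      rw [← hss, show star s * s * (star s * s) = star s * (s * (star s * s)) by
        simp only [mul_assoc], hsss, mul_smul_comm, hss]
    have heq2 : (1:B) - F - F + F * F = T • (1:B) - T • F :=
      calc (1:B) - F - F + F * F = (1 - F) * (1 - F) := by noncomm_ring
        _ = T • (1 - F) := heq
        _ = T • (1:B) - T • F := smul_sub T 1 F
    have h := congrArg (· * f 0 j) heq2
    simp only [add_mul, sub_mul, one_mul, smul_mul_assoc, mul_assoc] at h
    rw [L1 j, ← mul_assoc, L1 0, mul_assoc] at h
    have h2 : f 0 0 * (f 0 0 * f 0 j)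
        = (T • f 0 j - T • (f 0 0 * f 0 j)) - (f 0 j - f 0 0 * f 0 j - f 0 0 * f 0 j) := by
      rw [← h]; abel
    rw [h2]; abel
  -- cube/square collapse machinery
  have c2 : ∀ x : B, F * x = ∑ k, f k k * x := fun x => by rw [hF, Finset.sum_mul]
  have cK : ∀ (k : Fin n) (x : B), f k k * (F * x) = f k k * (f k k * x) := by
    intro k x
    rw [c2 x, Finset.mul_sum, Finset.sum_eq_single k]
    · intro b _ hb; rw [← mul_assoc, hmul k k b b, if_neg (Ne.symm hb), zero_mul]
    · simp
  have cD : ∀ x : B, F * (F * x) = ∑ k, f k k * (f k k * x) := by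
    intro x
    rw [c2 (F * x)]
    exact Finset.sum_congr rfl fun k _ => cK k x
  have cT : ∀ x : B, F * (F * (F * x)) = ∑ k, f k k * (f k k * (f k k * x)) := by
    intro x
    rw [c2 (F * (F * x))]
    refine Finset.sum_congr rfl fun k _ => ?_
    rw [cK k (F * x), cK k x]
  have hsFx : ∀ x : B, s * (F * x) = (1 - T) • (s * x) := fun x => by
    rw [← mul_assoc, hsF, smul_mul_assoc]
  have eterm : ∀ (k : Fin n) (x : B), f k 0 * (star s * (s * (f 0 k * x)))
      = f k k * (f k k * x) - f k k * (f k k * (f k k * x)) := by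
    intro k x
    have h1 : star s * (s * (f 0 k * x)) = f 0 k * x - f 0 0 * (f 0 k * x) := by
      rw [← mul_assoc, hss, sub_mul, one_mul, ← mul_assoc, L1 k, mul_assoc]
    rw [h1, mul_sub]
    congr 1
    · rw [← mul_assoc, hmul k 0 0 k, if_pos rfl, mul_assoc]
    · rw [← mul_assoc, hmul k 0 0 0, if_pos rfl, mul_assoc, ← mul_assoc (f k 0),
        hmul k 0 0 k, if_pos rfl, mul_assoc]
  have hkeyX : ∀ x : B, s * (∑ k, f k 0 * (star s * (s * (f 0 k * x))))
      = (T * (1 - T) ^ 2) • (s * x) := by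
    intro x
    rw [Finset.sum_congr rfl (fun k _ => eterm k x),
      Finset.sum_sub_distrib, ← cD x, ← cT x, mul_sub]
    simp only [hsFx, smul_smul, ← sub_smul]
    congr 1; ring
  have hkey1 : s * (∑ k, f k 0 * (star s * (s * f 0 k))) = (T * (1 - T) ^ 2) • s := by
    have h := hkeyX 1
    simpa using h
  -- scalar non-vanishing facts
  have hne1 : ((t - t ^ 2 : ℝ) : ℂ) ≠ 0 := Complex.ofReal_ne_zero.mpr (by nlinarith)
  have hne2 : ((Real.sqrt t * (1 - t) : ℝ) : ℂ) ≠ 0 := by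
    refine Complex.ofReal_ne_zero.mpr (ne_of_gt (mul_pos (Real.sqrt_pos.mpr ht0) (by linarith)))
  have hT0 : T ≠ 0 := Complex.ofReal_ne_zero.mpr ht0.ne'
  have hT1 : (1 : ℂ) - T ≠ 0 := by
    rw [hT, show (1:ℂ) - (t:ℝ) = ((1 - t : ℝ) : ℂ) by push_cast; ring]
    exact Complex.ofReal_ne_zero.mpr (by linarith)
  constructor
  · -- part (i)
    have hterm1 : ∀ j, star (c j 0) * d j
        = ((((Real.sqrt t * (1 - t) : ℝ) : ℂ))⁻¹ * (((t - t ^ 2 : ℝ) : ℂ))⁻¹)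
            • (f 0 0 * (s * (f j 0 * (star s * (s * f 0 j))))) := by
      intro j
      rw [hc j 0, hd j]
      simp only [star_smul, star_mul, star_star, hstar, Complex.star_def, map_inv₀,
        Complex.conj_ofReal, smul_mul_assoc, mul_smul_comm, smul_smul, mul_assoc]
    rw [Finset.sum_congr rfl (fun j _ => hterm1 j), ← Finset.smul_sum,
      ← Finset.mul_sum, ← Finset.mul_sum, hkey1, mul_smul_comm, hfs,
      smul_smul, smul_smul]
    convert one_smul ℂ s using 2
    have h1 : ((Real.sqrt t : ℝ) : ℂ) ≠ 0 :=
      Complex.ofReal_ne_zero.mpr (Real.sqrt_pos.mpr ht0).ne'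
    have h2 : ((t : ℝ) : ℂ) - ((t : ℝ) : ℂ) ^ 2 ≠ 0 := by push_cast at hne1; exact hne1
    have h3 : (1 : ℂ) - ((t : ℝ) : ℂ) ≠ 0 := hT1
    have h0 : ((t : ℝ) : ℂ) ≠ 0 := hT0
    simp only [hT]
    push_cast
    field_simp
  · -- part (ii)
    intro j
    have hterm2 : ∀ k, star (c k 0) * c k j
        = ((((t - t ^ 2 : ℝ) : ℂ))⁻¹ * (((t - t ^ 2 : ℝ) : ℂ))⁻¹)
            • (f 0 0 * (s * (f k 0 * (star s * (s * (f 0 k * (star s * f 0 j))))))) := by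
      intro k
      rw [hc k 0, hc k j]
      simp only [star_smul, star_mul, star_star, hstar, Complex.star_def, map_inv₀,
        Complex.conj_ofReal, smul_mul_assoc, mul_smul_comm, smul_smul, mul_assoc]
    have hterm3 : star (d 0) * d j
        = ((((Real.sqrt t * (1 - t) : ℝ) : ℂ))⁻¹ * (((Real.sqrt t * (1 - t) : ℝ) : ℂ))⁻¹)
            • (f 0 0 * (star s * (s * f 0 j))) := by
      rw [hd 0, hd j]
      simp only [star_smul, star_mul, star_star, hstar, Complex.star_def, map_inv₀,
        Complex.conj_ofReal, smul_mul_assoc, mul_smul_comm, smul_smul, mul_assoc]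
    rw [Finset.sum_congr rfl (fun k _ => hterm2 k), ← Finset.smul_sum,
      ← Finset.mul_sum, ← Finset.mul_sum, hkeyX (star s * f 0 j)]
    rw [show s * (star s * f 0 j) = s * star s * f 0 j from (mul_assoc s _ _).symm]
    rw [mul_smul_comm, hP, hstst j]
    rw [hterm3]
    rw [show star s * (s * f 0 j) = star s * s * f 0 j from (mul_assoc _ s _).symm,
      hss, sub_mul (1:B) F (f 0 j), one_mul, L1 j,
      mul_sub (f 0 0) (f 0 j) (f 0 0 * f 0 j), hquadj j]
    have hδ : (((Real.sqrt t * (1 - t) : ℝ) : ℂ))⁻¹ * (((Real.sqrt t * (1 - t) : ℝ) : ℂ))⁻¹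
        = (((t * (1 - t) ^ 2 : ℝ) : ℂ))⁻¹ := by
      have hr : (Real.sqrt t * (1 - t)) * (Real.sqrt t * (1 - t)) = t * (1 - t) ^ 2 := by
        rw [mul_mul_mul_comm, Real.mul_self_sqrt ht0.le]; ring
      rw [← mul_inv, ← Complex.ofReal_mul, hr]
    rw [hδ]
    have h2 : ((t : ℝ) : ℂ) - ((t : ℝ) : ℂ) ^ 2 ≠ 0 := by push_cast at hne1; exact hne1
    have h3 : (1 : ℂ) - ((t : ℝ) : ℂ) ≠ 0 := hT1
    have h4 : ((t : ℝ) : ℂ) * (1 - ((t : ℝ) : ℂ)) ^ 2 ≠ 0 :=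
      mul_ne_zero hT0 (pow_ne_zero 2 hT1)
    have h0 : ((t : ℝ) : ℂ) ≠ 0 := hT0
    match_scalars
    · simp only [hT]
      field_simp
      ring
    · simp only [hT]
      field_simp
      ring
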